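/- Under the highest-weight axioms, if 0 → L → M → N → 0 is a short exact sequence of A-modules and both M and N admit Δ-filtrations, then L admits a Δ-filtration. -/

import Mathlib

/-- The subquotient `q / p` associated with submodules `p ≤ q` of a module. -/
abbrev Subquot {A M : Type} [Ring A] [AddCommGroup M] [Module A M]
    (p q : Submodule A M) : Type :=
  ↥q ⧸ (p.comap q.subtype)

/-- `M` has a finite filtration `0 = M₀ ⊆ M₁ ⊆ ⋯ ⊆ M_r = M` whose successive
quotients are standard modules `Δ μ` with `μ ∈ S`. -/
def HasFilt (A : Type) [Ring A] {Λ : Type} (Δ : Λ → Type)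
    [∀ l, AddCommGroup (Δ l)] [∀ l, Module A (Δ l)]
    (S : Set Λ) (M : Type) [AddCommGroup M] [Module A M] : Prop :=
  ∃ (r : ℕ) (c : Fin (r + 1) → Submodule A M),
    Monotone c ∧ c 0 = ⊥ ∧ c (Fin.last r) = ⊤ ∧
    ∀ k : Fin r, ∃ μ ∈ S, Nonempty (Subquot (c k.castSucc) (c k.succ) ≃ₗ[A] Δ μ)

/-- `M` belongs to the class `C_S`: every simple subquotient of `M` is isomorphic
to some `L μ` with `μ ∈ S`. -/
def InC (A : Type) [Ring A] {Λ : Type} (L : Λ → Type)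
    [∀ l, AddCommGroup (L l)] [∀ l, Module A (L l)]
    (S : Set Λ) (M : Type) [AddCommGroup M] [Module A M] : Prop :=
  ∀ p q : Submodule A M, p ≤ q → IsSimpleModule A (Subquot p q) →
    ∃ μ ∈ S, Nonempty (Subquot p q ≃ₗ[A] L μ)


section Tools
variable {A : Type} [Ring A]

theorem subsing_of_bot_eq_top {M : Type} [AddCommGroup M] [Module A M]
    (h : (⊥ : Submodule A M) = ⊤) : Subsingleton M := by
  refine ⟨fun x y => ?_⟩
  have hx : x ∈ (⊥ : Submodule A M) := h ▸ Submodule.mem_top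
  have hy : y ∈ (⊥ : Submodule A M) := h ▸ Submodule.mem_top
  simp only [Submodule.mem_bot] at hx hy
  rw [hx, hy]

theorem bot_eq_top_of_subsing {M : Type} [AddCommGroup M] [Module A M]
    (h : Subsingleton M) : (⊥ : Submodule A M) = ⊤ := by
  ext x
  simp [h.elim x 0]

noncomputable def subquotCongrMap {M M' : Type} [AddCommGroup M] [Module A M]
    [AddCommGroup M'] [Module A M']
    (φ : M' →ₗ[A] M) (a b : Submodule A M)
    (hsur : ∀ y ∈ b, ∃ x ∈ b.comap φ, y - φ x ∈ a) :
    Subquot (a.comap φ) (b.comap φ) ≃ₗ[A] Subquot a b := by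
  have hres : ∀ x ∈ b.comap φ, φ x ∈ b := fun x hx => hx
  set f1 : ↥(b.comap φ) →ₗ[A] ↥b := φ.restrict hres with hf1
  set ψ : ↥(b.comap φ) →ₗ[A] Subquot a b := (a.comap b.subtype).mkQ.comp f1 with hψ
  have hker : LinearMap.ker ψ = (a.comap φ).comap (b.comap φ).subtype := by
    ext x
    simp only [hψ, LinearMap.mem_ker, LinearMap.comp_apply, Submodule.mkQ_apply,
      Submodule.Quotient.mk_eq_zero, Submodule.mem_comap, hf1, LinearMap.restrict_apply,
      Submodule.coe_subtype]
  have hsurj : Function.Surjective ψ := by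
    intro z
    obtain ⟨y, rfl⟩ := Submodule.mkQ_surjective _ z
    obtain ⟨x, hx, hd⟩ := hsur y.1 y.2
    refine ⟨⟨x, hx⟩, ?_⟩
    show ((a.comap b.subtype).mkQ) (f1 ⟨x, hx⟩) = (a.comap b.subtype).mkQ y
    rw [Submodule.mkQ_apply, Submodule.mkQ_apply, Submodule.Quotient.eq]
    have hval : ((f1 ⟨x, hx⟩ : ↥b) : M) = φ x := by simp [hf1, LinearMap.restrict_apply]
    show (f1 ⟨x, hx⟩ - y : ↥b) ∈ a.comap b.subtype
    simp only [Submodule.mem_comap, Submodule.coe_subtype, AddSubgroupClass.coe_sub, hval]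
    simpa [neg_sub] using a.neg_mem hd
  exact (Submodule.quotEquivOfEq _ _ hker.symm).trans (ψ.quotKerEquivOfSurjective hsurj)

/-- `Subquot p q ≃ image of q in M/p`. -/
noncomputable def subquotToMap {M : Type} [AddCommGroup M] [Module A M]
    (p q : Submodule A M) : Subquot p q ≃ₗ[A] ↥(q.map p.mkQ) := by
  set θ : ↥q →ₗ[A] M ⧸ p := p.mkQ.comp q.subtype with hθ
  have hker : p.comap q.subtype = LinearMap.ker θ := by
    rw [hθ, LinearMap.ker_comp, Submodule.ker_mkQ]
  have hrange : LinearMap.range θ = q.map p.mkQ := by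
    rw [hθ, LinearMap.range_comp, Submodule.range_subtype]
  exact (Submodule.quotEquivOfEq _ _ hker).trans
    (θ.quotKerEquivRange.trans (LinearEquiv.ofEq _ _ hrange))

noncomputable def subquotBotEquiv {M : Type} [AddCommGroup M] [Module A M]
    (p q : Submodule A M) (hp : p = ⊥) : Subquot p q ≃ₗ[A] ↥q :=
  Submodule.quotEquivOfEqBot _ (by rw [hp, Submodule.comap_bot, Submodule.ker_subtype])

noncomputable def subquotCongrEq {M : Type} [AddCommGroup M] [Module A M]
    (p q p' q' : Submodule A M) (hp : p = p') (hq : q = q') :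
    Subquot p q ≃ₗ[A] Subquot p' q' := by
  subst hp; subst hq; exact LinearEquiv.refl A _

end Tools

section FiltDef
variable (A : Type) [Ring A] {Λ : Type} (Δ : Λ → Type)
  [∀ l, AddCommGroup (Δ l)] [∀ l, Module A (Δ l)]

/-- `FiltL A Δ l M` : `M` has a Δ-filtration whose layers, from the bottom up,
are `Δ μ` for `μ` in the list `l`. -/
def FiltL : List Λ → (M : Type) → [AddCommGroup M] → [Module A M] → Prop
  | [] => fun M _ _ => Subsingleton M
  | μ :: t => fun M _ _ =>
      ∃ p : Submodule A M, Nonempty (↥p ≃ₗ[A] Δ μ) ∧ FiltL t (M ⧸ p)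

end FiltDef

section FiltBasic
variable {A : Type} [Ring A] {Λ : Type} {Δ : Λ → Type}
  [∀ l, AddCommGroup (Δ l)] [∀ l, Module A (Δ l)]

theorem FiltL_nil {M : Type} [AddCommGroup M] [Module A M] (h : Subsingleton M) :
    FiltL A Δ ([] : List Λ) M := h

theorem FiltL_congr (l : List Λ) : ∀ {M M' : Type} [AddCommGroup M] [Module A M]
    [AddCommGroup M'] [Module A M'],
    FiltL A Δ l M → (M ≃ₗ[A] M') → FiltL A Δ l M' := by
  induction l with
  | nil =>
    intro M M' _ _ _ _ h e
    exact @Equiv.subsingleton _ _ e.symm.toEquiv h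
  | cons μ t ih =>
    intro M M' _ _ _ _ h e
    obtain ⟨p, ⟨ep⟩, hq⟩ := h
    exact ⟨p.map (e : M →ₗ[A] M'), ⟨(e.submoduleMap p).symm.trans ep⟩,
      ih hq (Submodule.Quotient.equiv p (p.map (e : M →ₗ[A] M')) e rfl)⟩

theorem FiltL_single {μ : Λ} {M : Type} [AddCommGroup M] [Module A M]
    (e : M ≃ₗ[A] Δ μ) : FiltL A Δ [μ] M := by
  refine ⟨⊤, ⟨Submodule.topEquiv.trans e⟩, ?_⟩
  show Subsingleton (M ⧸ (⊤ : Submodule A M))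
  exact inferInstance

end FiltBasic

section HomVanish
variable {A : Type} [Ring A] {Λ : Type} {Δ : Λ → Type}
  [∀ l, AddCommGroup (Δ l)] [∀ l, Module A (Δ l)]

/-- If every `Δ μ → Y` (for `μ` in the list) vanishes, then every map from an
`l`-filtered module to `Y` vanishes. -/
theorem HVout (l : List Λ) : ∀ {X : Type} [AddCommGroup X] [Module A X]
    {Y : Type} [AddCommGroup Y] [Module A Y],
    FiltL A Δ l X → (∀ μ ∈ l, ∀ h : Δ μ →ₗ[A] Y, h = 0) →
    ∀ f : X →ₗ[A] Y, f = 0 := by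
  induction l with
  | nil =>
    intro X _ _ Y _ _ hX _ f
    have : Subsingleton X := hX
    ext x
    rw [this.elim x 0, map_zero, LinearMap.zero_apply]
  | cons μ t ih =>
    intro X _ _ Y _ _ hX hY f
    obtain ⟨p, ⟨ep⟩, hq⟩ := hX
    have h1 : (f.comp p.subtype).comp (ep.symm : Δ μ →ₗ[A] ↥p) = 0 :=
      hY μ (by simp) _
    have h2 : ∀ x ∈ p, f x = 0 := by
      intro x hx
      have := congrArg (fun g => g (ep ⟨x, hx⟩)) h1
      simpa using this
    have hle : p ≤ LinearMap.ker f := fun x hx => h2 x hx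
    have h3 : p.liftQ f hle = 0 := ih hq (fun ν hν => hY ν (by simp [hν])) _
    have h4 : (p.liftQ f hle).comp p.mkQ = f := Submodule.liftQ_mkQ p f hle
    rw [← h4, h3, LinearMap.zero_comp]

/-- If every `Z → Δ μ` (for `μ` in the list) vanishes, then every map from `Z`
to an `l`-filtered module vanishes. -/
theorem HVin (l : List Λ) : ∀ {Y : Type} [AddCommGroup Y] [Module A Y]
    {Z : Type} [AddCommGroup Z] [Module A Z],
    FiltL A Δ l Y → (∀ μ ∈ l, ∀ h : Z →ₗ[A] Δ μ, h = 0) →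
    ∀ f : Z →ₗ[A] Y, f = 0 := by
  induction l with
  | nil =>
    intro Y _ _ Z _ _ hY _ f
    have : Subsingleton Y := hY
    ext x
    exact this.elim _ _
  | cons μ t ih =>
    intro Y _ _ Z _ _ hY hZ f
    obtain ⟨p, ⟨ep⟩, hq⟩ := hY
    have h1 : p.mkQ.comp f = 0 := ih hq (fun ν hν => hZ ν (by simp [hν])) _
    have hmem : ∀ z, f z ∈ p := by
      intro z
      have := congrArg (fun g => g z) h1
      simpa [Submodule.Quotient.mk_eq_zero] using this
    set f' : Z →ₗ[A] ↥p := f.codRestrict p hmem with hf'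
    have h2 : (ep : ↥p →ₗ[A] Δ μ).comp f' = 0 := hZ μ (by simp) _
    ext z
    have := congrArg (fun g => g z) h2
    simp only [LinearMap.comp_apply, LinearMap.zero_apply] at this ⊢
    have h3 : f' z = 0 := by
      apply ep.injective
      simpa using this
    have : f z = ((f' z : ↥p) : Y) := rfl
    rw [this, h3, ZeroMemClass.coe_zero]

theorem HomVanish {lX lY : List Λ} {X : Type} [AddCommGroup X] [Module A X]
    {Y : Type} [AddCommGroup Y] [Module A Y]
    (hX : FiltL A Δ lX X) (hY : FiltL A Δ lY Y)
    (hvan : ∀ ν ∈ lX, ∀ μ ∈ lY, ∀ h : Δ ν →ₗ[A] Δ μ, h = 0)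
    (f : X →ₗ[A] Y) : f = 0 :=
  HVout lX hX (fun ν hν h => HVin lY hY (fun μ hμ => hvan ν hν μ hμ) h) f

end HomVanish

section Convert
variable {A : Type} [Ring A] {Λ : Type} {Δ : Λ → Type}
  [∀ l, AddCommGroup (Δ l)] [∀ l, Module A (Δ l)]

noncomputable def subquotCongrSurj {M M' : Type} [AddCommGroup M] [Module A M]
    [AddCommGroup M'] [Module A M'] (φ : M' →ₗ[A] M) (hφ : Function.Surjective φ)
    (a b : Submodule A M) :
    Subquot (a.comap φ) (b.comap φ) ≃ₗ[A] Subquot a b :=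
  subquotCongrMap φ a b (fun y hy => by
    obtain ⟨x, rfl⟩ := hφ y
    exact ⟨x, hy, by simp⟩)

theorem chain_to_FiltL {S : Set Λ} : ∀ (r : ℕ) {M : Type} [AddCommGroup M] [Module A M]
    (c : Fin (r + 1) → Submodule A M), Monotone c → c 0 = ⊥ → c (Fin.last r) = ⊤ →
    (∀ k : Fin r, ∃ μ ∈ S, Nonempty (Subquot (c k.castSucc) (c k.succ) ≃ₗ[A] Δ μ)) →
    ∃ l : List Λ, (∀ μ ∈ l, μ ∈ S) ∧ FiltL A Δ l M := by
  intro r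
  induction r with
  | zero =>
    intro M _ _ c _ h0 hl _
    have hbt : (⊥ : Submodule A M) = ⊤ := by rw [← h0]; exact hl
    exact ⟨[], fun μ h => absurd h List.not_mem_nil, FiltL_nil (subsing_of_bot_eq_top hbt)⟩
  | succ s ih =>
    intro M _ _ c hmono h0 hl hlay
    obtain ⟨μ₀, hμ₀S, ⟨e₀⟩⟩ := hlay 0
    set p := c (0 : Fin (s + 1)).succ with hp
    have hbot : c ((0 : Fin (s + 1)).castSucc) = ⊥ := by
      rw [Fin.castSucc_zero]; exact h0
    have ep : ↥p ≃ₗ[A] Δ μ₀ := (subquotBotEquiv _ p hbot).symm.trans e₀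
    set c' : Fin (s + 1) → Submodule A (M ⧸ p) := fun k => (c k.succ).map p.mkQ with hc'
    have hmono' : Monotone c' := fun i j hij =>
      Submodule.map_mono (hmono (Fin.succ_le_succ_iff.mpr hij))
    have h0' : c' 0 = ⊥ := by
      apply le_bot_iff.mp
      rintro x ⟨y, hy, rfl⟩
      show p.mkQ y ∈ (⊥ : Submodule A (M ⧸ p))
      rw [Submodule.mem_bot, Submodule.mkQ_apply, Submodule.Quotient.mk_eq_zero]
      exact hy
    have hl' : c' (Fin.last s) = ⊤ := by
      show (c (Fin.last s).succ).map p.mkQ = ⊤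
      rw [Fin.succ_last, hl, Submodule.map_top, Submodule.range_mkQ]
    have hlay' : ∀ k : Fin s, ∃ μ ∈ S,
        Nonempty (Subquot (c' k.castSucc) (c' k.succ) ≃ₗ[A] Δ μ) := by
      intro k
      obtain ⟨μ, hμS, ⟨e⟩⟩ := hlay k.succ
      refine ⟨μ, hμS, ⟨?_⟩⟩
      set a := c (k.succ).castSucc with ha
      set b := c (k.succ).succ with hb
      have hpa : p ≤ a := by
        apply hmono
        rw [Fin.le_def]
        simp [Fin.val_succ]
      have hpb : p ≤ b := by
        apply hmono
        rw [Fin.le_def]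
        simp [Fin.val_succ]
      have hca : (a.map p.mkQ).comap p.mkQ = a := by
        rw [Submodule.comap_map_eq, Submodule.ker_mkQ, sup_eq_left.mpr hpa]
      have hcb : (b.map p.mkQ).comap p.mkQ = b := by
        rw [Submodule.comap_map_eq, Submodule.ker_mkQ, sup_eq_left.mpr hpb]
      have hsub := subquotCongrSurj p.mkQ (Submodule.mkQ_surjective p)
        (a.map p.mkQ) (b.map p.mkQ)
      rw [hca, hcb] at hsub
      have hac : c' k.castSucc = a.map p.mkQ := by
        simp only [hc', ha]
        rw [Fin.succ_castSucc]
      have hbc : c' k.succ = b.map p.mkQ := rfl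
      rw [hac, hbc]
      exact hsub.symm.trans e
    obtain ⟨l', hl'S, hF⟩ := ih c' hmono' h0' hl' hlay'
    refine ⟨μ₀ :: l', ?_, p, ⟨ep⟩, hF⟩
    intro ν hν
    rcases List.mem_cons.mp hν with rfl | h
    · exact hμ₀S
    · exact hl'S ν h

theorem HasFilt_to_FiltL {S : Set Λ} {M : Type} [AddCommGroup M] [Module A M]
    (h : HasFilt A Δ S M) : ∃ l : List Λ, (∀ μ ∈ l, μ ∈ S) ∧ FiltL A Δ l M := by
  obtain ⟨r, c, hmono, h0, hl, hlay⟩ := h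
  exact chain_to_FiltL r c hmono h0 hl hlay

theorem FiltL_to_HasFilt {S : Set Λ} (l : List Λ) :
    ∀ {M : Type} [AddCommGroup M] [Module A M],
    FiltL A Δ l M → (∀ μ ∈ l, μ ∈ S) → HasFilt A Δ S M := by
  induction l with
  | nil =>
    intro M _ _ hF _
    refine ⟨0, fun _ => ⊥, monotone_const, rfl, ?_, fun k => k.elim0⟩
    exact bot_eq_top_of_subsing hF
  | cons μ t ih =>
    intro M _ _ hF hmem
    obtain ⟨p, ⟨ep⟩, hq⟩ := hF
    obtain ⟨r, c, hmono, h0, hl, hlay⟩ := ih hq (fun ν hν => hmem ν (by simp [hν]))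
    set c'' : Fin (r + 1 + 1) → Submodule A M :=
      Fin.cons ⊥ (fun k => (c k).comap p.mkQ) with hc''
    refine ⟨r + 1, c'', ?_, ?_, ?_, ?_⟩
    · intro i j hij
      induction i using Fin.cases with
      | zero => simp [hc'']
      | succ i' =>
        induction j using Fin.cases with
        | zero =>
          exfalso
          rw [Fin.le_def] at hij
          simp [Fin.val_succ] at hij
        | succ j' =>
          simp only [hc'', Fin.cons_succ]
          exact Submodule.comap_mono (hmono (Fin.succ_le_succ_iff.mp hij))
    · simp [hc'']
    · have : Fin.last (r + 1) = (Fin.last r).succ := (Fin.succ_last r).symm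
      rw [this]
      simp only [hc'', Fin.cons_succ]
      rw [hl, Submodule.comap_top]
    · intro k
      induction k using Fin.cases with
      | zero =>
        refine ⟨μ, hmem μ (by simp), ⟨?_⟩⟩
        have h1 : c'' (0 : Fin (r + 1)).castSucc = ⊥ := by simp [hc'']
        have h2 : c'' (0 : Fin (r + 1)).succ = p := by
          show (Fin.cons ⊥ (fun k => (c k).comap p.mkQ) : Fin (r+1+1) → Submodule A M)
            ((0 : Fin (r + 1)).succ) = p
          rw [show ((0 : Fin (r + 1)).succ) = Fin.succ 0 from rfl, Fin.cons_succ,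
            h0, Submodule.comap_bot, Submodule.ker_mkQ]
        exact ((subquotBotEquiv _ _ h1).trans (LinearEquiv.ofEq _ _ h2)).trans ep
      | succ j =>
        obtain ⟨ν, hνS, ⟨e⟩⟩ := hlay j
        refine ⟨ν, hνS, ⟨?_⟩⟩
        have h1 : c'' (j.succ).castSucc = (c j.castSucc).comap p.mkQ := by
          rw [← Fin.succ_castSucc]
          simp [hc'']
        have h2 : c'' (j.succ).succ = (c j.succ).comap p.mkQ := by
          simp [hc'']
        exact (subquotCongrEq _ _ _ _ h1 h2).trans
          ((subquotCongrSurj p.mkQ (Submodule.mkQ_surjective p) _ _).trans e)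

end Convert

section Factor
variable {A : Type} [Ring A]

theorem factor_through {X Y Z : Type} [AddCommGroup X] [Module A X]
    [AddCommGroup Y] [Module A Y] [AddCommGroup Z] [Module A Z]
    (φ : X →ₗ[A] Y) (π : X →ₗ[A] Z) (hsur : Function.Surjective π)
    (hker : LinearMap.ker π ≤ LinearMap.ker φ) :
    ∃ ψ : Z →ₗ[A] Y, ψ.comp π = φ := by
  set e := π.quotKerEquivOfSurjective hsur with he
  refine ⟨((LinearMap.ker π).liftQ φ hker).comp (e.symm : Z →ₗ[A] _), ?_⟩
  ext x
  simp only [LinearMap.comp_apply, LinearEquiv.coe_coe]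
  have h1 : e ((LinearMap.ker π).mkQ x) = π x := by
    simp [he, LinearMap.quotKerEquivOfSurjective, LinearMap.quotKerEquivRange]
  rw [← h1, LinearEquiv.symm_apply_apply]
  simp

theorem endo_inv {K : Type} [Field K] [Algebra K A] {D : Type} [AddCommGroup D]
    [Module A D]
    (hend : ∀ f : D →ₗ[A] D, ∃ c : K, ∀ x, f x = algebraMap K A c • x)
    (h : D →ₗ[A] D) (hne : h ≠ 0) :
    ∃ hinv : D →ₗ[A] D, (∀ d, h (hinv d) = d) ∧ (∀ d, hinv (h d) = d) := by
  obtain ⟨c, hc⟩ := hend h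
  have hc0 : c ≠ 0 := by
    rintro rfl
    apply hne
    ext x
    simp [hc x]
  set u := algebraMap K A c⁻¹ with hu
  have hcomm : ∀ (a : A) (x : D), u • a • x = a • u • x := fun a x => by
    rw [smul_smul, smul_smul, hu, Algebra.commutes]
  have hmap : ∀ (a : A) (x : D), u • (a • x) = (RingHom.id A) a • (u • x) := by
    intro a x
    simpa using hcomm a x
  refine ⟨{ toFun := fun x => u • x, map_add' := fun x y => smul_add u x y,
            map_smul' := hmap }, ?_, ?_⟩
  · intro d
    show h (u • d) = d
    rw [hc, smul_smul, hu, ← map_mul, mul_inv_cancel₀ hc0, map_one, one_smul]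
  · intro d
    show u • h d = d
    rw [hc, smul_smul, hu, ← map_mul, inv_mul_cancel₀ hc0, map_one, one_smul]

theorem exists_max_elt {Λ : Type} [PartialOrder Λ] :
    ∀ l : List Λ, l ≠ [] → ∃ a ∈ l, ∀ b ∈ l, ¬ a < b := by
  intro l
  induction l with
  | nil => intro h; exact absurd rfl h
  | cons x t ih =>
    intro _
    by_cases ht : t = []
    · subst ht
      exact ⟨x, by simp, by simp⟩
    · obtain ⟨a, haM, hmax⟩ := ih ht
      by_cases hax : a < x
      · refine ⟨x, by simp, ?_⟩
        intro b hb
        rcases List.mem_cons.mp hb with rfl | hbt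
        · exact lt_irrefl _
        · exact fun hxb => hmax b hbt (hax.trans hxb)
      · refine ⟨a, by simp [haM], ?_⟩
        intro b hb
        rcases List.mem_cons.mp hb with rfl | hbt
        · exact hax
        · exact hmax b hbt

end Factor

section HW
variable {A : Type} [Ring A] {Λ : Type} [PartialOrder Λ]
  {Δ : Λ → Type} [∀ l, AddCommGroup (Δ l)] [∀ l, Module A (Δ l)]
  {P : Λ → Type} [∀ l, AddCommGroup (P l)] [∀ l, Module A (P l)]

theorem split_lemma
    (hhom : ∀ l m, ¬ l ≤ m → ∀ f : Δ l →ₗ[A] Δ m, f = 0)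
    (hproj : ∀ l, Module.Projective A (P l))
    (rh : ∀ l, P l →ₗ[A] Δ l)
    (hrhsurj : ∀ l, Function.Surjective (rh l))
    (hrhkerL : ∀ l, ∃ l0 : List Λ, (∀ ν ∈ l0, l < ν) ∧
      FiltL A Δ l0 ↥(LinearMap.ker (rh l)))
    {μ lam : Λ} (hnl : ¬ μ < lam) {X : Type} [AddCommGroup X] [Module A X]
    (π : X →ₗ[A] Δ μ) (hπ : Function.Surjective π)
    (eker : ↥(LinearMap.ker π) ≃ₗ[A] Δ lam) :
    ∃ s : Δ μ →ₗ[A] X, ∀ d, π (s d) = d := by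
  obtain ⟨l0, hl0gt, hl0F⟩ := hrhkerL μ
  have hXF : FiltL A Δ [lam, μ] X :=
    ⟨LinearMap.ker π, ⟨eker⟩, FiltL_single (π.quotKerEquivOfSurjective hπ)⟩
  obtain ⟨φ, hφ⟩ := Module.projective_lifting_property (h := hproj μ) π (rh μ) hπ
  have hφ0 : φ.comp (LinearMap.ker (rh μ)).subtype = 0 := by
    apply HomVanish hl0F hXF
    intro ν hν ρ hρ h
    rcases List.mem_cons.mp hρ with rfl | hρ'
    · exact hhom ν ρ (fun hle => hnl (lt_of_lt_of_le (hl0gt ν hν) hle)) h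
    · have : ρ = μ := by simpa using hρ'
      subst this
      exact hhom ν ρ (fun hle => absurd (lt_of_le_of_lt hle (hl0gt ν hν))
        (lt_irrefl ν)) h
  have hker : LinearMap.ker (rh μ) ≤ LinearMap.ker φ := by
    intro x hx
    have := congrArg (fun g => g (⟨x, hx⟩ : ↥(LinearMap.ker (rh μ)))) hφ0
    simpa using this
  obtain ⟨ψ, hψ⟩ := factor_through φ (rh μ) (hrhsurj μ) hker
  refine ⟨ψ, fun d => ?_⟩
  obtain ⟨x, rfl⟩ := hrhsurj μ d
  have h1 : ψ (rh μ x) = φ x := congrArg (fun g => g x) hψ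
  have h2 : π (φ x) = rh μ x := congrArg (fun g => g x) hφ
  rw [h1, h2]

theorem swap_lemma
    (hhom : ∀ l m, ¬ l ≤ m → ∀ f : Δ l →ₗ[A] Δ m, f = 0)
    (hproj : ∀ l, Module.Projective A (P l))
    (rh : ∀ l, P l →ₗ[A] Δ l)
    (hrhsurj : ∀ l, Function.Surjective (rh l))
    (hrhkerL : ∀ l, ∃ l0 : List Λ, (∀ ν ∈ l0, l < ν) ∧
      FiltL A Δ l0 ↥(LinearMap.ker (rh l)))
    {a b : Λ} (hba : ¬ b < a) {t : List Λ} {M : Type} [AddCommGroup M] [Module A M]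
    (h : FiltL A Δ (a :: b :: t) M) : FiltL A Δ (b :: a :: t) M := by
  obtain ⟨p, ⟨e₁⟩, pbar, ⟨e₂⟩, hF⟩ := h
  set q := pbar.comap p.mkQ with hq
  have hpq : p ≤ q := by
    intro x hx
    show p.mkQ x ∈ pbar
    rw [Submodule.mkQ_apply, (Submodule.Quotient.mk_eq_zero p).mpr hx]
    exact pbar.zero_mem
  have hres : ∀ x ∈ q, p.mkQ x ∈ pbar := fun x hx => hx
  set π₀ : ↥q →ₗ[A] Δ b := (e₂ : ↥pbar →ₗ[A] Δ b).comp (p.mkQ.restrict hres) with hπ₀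
  have hπ₀surj : Function.Surjective π₀ := by
    intro y
    obtain ⟨x, hx⟩ := Submodule.mkQ_surjective p ((e₂.symm y : ↥pbar) : M ⧸ p)
    have hxq : x ∈ q := by
      show p.mkQ x ∈ pbar
      rw [hx]
      exact (e₂.symm y).2
    refine ⟨⟨x, hxq⟩, ?_⟩
    show e₂ (p.mkQ.restrict hres ⟨x, hxq⟩) = y
    have hv : (p.mkQ.restrict hres ⟨x, hxq⟩ : ↥pbar) = e₂.symm y :=
      Subtype.ext (by simpa [LinearMap.restrict_apply] using hx)
    rw [hv, e₂.apply_symm_apply]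
  have hkerπ₀ : LinearMap.ker π₀ = p.comap q.subtype := by
    ext x
    have hx : π₀ x = e₂ (p.mkQ.restrict hres x) := rfl
    rw [LinearMap.mem_ker, hx, LinearEquiv.map_eq_zero_iff e₂]
    constructor
    · intro h0
      have h0' : (p.mkQ.restrict hres x : M ⧸ p) = 0 := congrArg Subtype.val h0
      have hmk : (Submodule.Quotient.mk (x : M) : M ⧸ p) = 0 := by
        simpa [LinearMap.restrict_apply] using h0'
      have hxp : (x : M) ∈ p := (Submodule.Quotient.mk_eq_zero p).mp hmk
      simpa [Submodule.mem_comap] using hxp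
    · intro hp'
      apply Subtype.ext
      have : (x : M) ∈ p := by simpa using hp'
      simpa [LinearMap.restrict_apply, Submodule.Quotient.mk_eq_zero] using this
  have eker : ↥(LinearMap.ker π₀) ≃ₗ[A] Δ a :=
    (LinearEquiv.ofEq _ _ hkerπ₀).trans ((Submodule.comapSubtypeEquivOfLe hpq).trans e₁)
  obtain ⟨s, hs⟩ := split_lemma hhom hproj rh hrhsurj hrhkerL hba π₀ hπ₀surj eker
  have hsinj : Function.Injective s := fun d1 d2 hd => by rw [← hs d1, ← hs d2, hd]
  set p' := (LinearMap.range s).map q.subtype with hp'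
  have hp'q : p' ≤ q := by
    rintro x ⟨y, -, rfl⟩
    exact y.2
  have ep' : ↥p' ≃ₗ[A] Δ b :=
    ((LinearEquiv.ofInjective s hsinj).trans
      (Submodule.equivMapOfInjective q.subtype (Submodule.injective_subtype q)
        (LinearMap.range s))).symm
  set q' := q.map p'.mkQ with hq'
  have hcc : p'.comap q.subtype = LinearMap.range s := by
    rw [hp', Submodule.comap_map_eq, Submodule.ker_subtype, sup_bot_eq]
  set κ : ↥(LinearMap.ker π₀) →ₗ[A] (↥q ⧸ LinearMap.range s) :=
    (LinearMap.range s).mkQ.comp (LinearMap.ker π₀).subtype with hκ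
  have hκinj : Function.Injective κ := by
    intro x1 x2 hx
    have hx' : (LinearMap.range s).mkQ ((x1 : ↥q) - (x2 : ↥q)) = 0 := by
      rw [map_sub]
      have e1 : κ x1 = (LinearMap.range s).mkQ (x1 : ↥q) := rfl
      have e2 : κ x2 = (LinearMap.range s).mkQ (x2 : ↥q) := rfl
      rw [← e1, ← e2, hx, sub_self]
    have hmem : (x1 : ↥q) - (x2 : ↥q) ∈ LinearMap.range s := by
      rw [Submodule.mkQ_apply] at hx'
      exact (Submodule.Quotient.mk_eq_zero _).mp hx'
    obtain ⟨d, hd⟩ := hmem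
    have hd0 : d = 0 := by
      have h1 : π₀ ((x1 : ↥q) - (x2 : ↥q)) = 0 := by
        rw [map_sub, x1.2, x2.2, sub_self]
      rw [← hd] at h1
      rw [hs d] at h1
      exact h1
    apply Subtype.ext
    rw [hd0, map_zero] at hd
    exact sub_eq_zero.mp hd.symm
  have hκsurj : Function.Surjective κ := by
    intro z
    obtain ⟨y, rfl⟩ := Submodule.mkQ_surjective _ z
    have hy0 : y - s (π₀ y) ∈ LinearMap.ker π₀ := by
      rw [LinearMap.mem_ker, map_sub, hs, sub_self]
    refine ⟨⟨y - s (π₀ y), hy0⟩, ?_⟩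
    show (LinearMap.range s).mkQ (y - s (π₀ y)) = (LinearMap.range s).mkQ y
    rw [map_sub]
    have : (LinearMap.range s).mkQ (s (π₀ y)) = 0 := by
      rw [Submodule.mkQ_apply, Submodule.Quotient.mk_eq_zero]
      exact ⟨π₀ y, rfl⟩
    rw [this, sub_zero]
  have iso1 : ↥q' ≃ₗ[A] Δ a := by
    have h1 := subquotToMap p' q
    have h2 : (↥q ⧸ (p'.comap q.subtype)) ≃ₗ[A] (↥q ⧸ LinearMap.range s) :=
      Submodule.quotEquivOfEq _ _ hcc
    exact (h1.symm.trans h2).trans ((LinearEquiv.ofBijective κ ⟨hκinj, hκsurj⟩).symm.trans eker)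
  have hmapq : Submodule.map p.mkQ q = pbar := by
    rw [hq, Submodule.map_comap_eq, Submodule.range_mkQ, top_inf_eq]
  have iso2 : ((M ⧸ p') ⧸ q') ≃ₗ[A] ((M ⧸ p) ⧸ pbar) :=
    (Submodule.quotientQuotientEquivQuotient p' q hp'q).trans
      (((Submodule.quotEquivOfEq pbar _ hmapq.symm).trans
        (Submodule.quotientQuotientEquivQuotient p q hpq)).symm)
  exact ⟨p', ⟨ep'⟩, q', ⟨iso1⟩, FiltL_congr t hF iso2.symm⟩

theorem pull_lemma
    (hhom : ∀ l m, ¬ l ≤ m → ∀ f : Δ l →ₗ[A] Δ m, f = 0)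
    (hproj : ∀ l, Module.Projective A (P l))
    (rh : ∀ l, P l →ₗ[A] Δ l)
    (hrhsurj : ∀ l, Function.Surjective (rh l))
    (hrhkerL : ∀ l, ∃ l0 : List Λ, (∀ ν ∈ l0, l < ν) ∧
      FiltL A Δ l0 ↥(LinearMap.ker (rh l))) :
    ∀ (l : List Λ) {M : Type} [AddCommGroup M] [Module A M],
    FiltL A Δ l M → ∀ a ∈ l, (∀ b ∈ l, ¬ a < b) →
    ∃ l', FiltL A Δ (a :: l') M ∧ l'.length + 1 = l.length ∧ ∀ μ ∈ l', μ ∈ l := by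
  intro l
  induction l with
  | nil => intro M _ _ _ a ha _; exact absurd ha List.not_mem_nil
  | cons x t ih =>
    intro M _ _ hF a ha hmax
    rcases List.mem_cons.mp ha with rfl | hat
    · exact ⟨t, hF, rfl, fun μ hμ => List.mem_cons_of_mem a hμ⟩
    · obtain ⟨p, hep, hq⟩ := hF
      obtain ⟨t', ht'F, ht'len, ht'mem⟩ :=
        ih hq a hat (fun b hb => hmax b (List.mem_cons_of_mem x hb))
      have hxF : FiltL A Δ (x :: a :: t') M := ⟨p, hep, ht'F⟩
      have hswap := swap_lemma hhom hproj rh hrhsurj hrhkerL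
        (hmax x List.mem_cons_self) hxF
      refine ⟨x :: t', hswap, ?_, ?_⟩
      · simp only [List.length_cons] at ht'len ⊢
        omega
      · intro μ hμ
        rcases List.mem_cons.mp hμ with rfl | h
        · exact List.mem_cons_self
        · exact List.mem_cons_of_mem x (ht'mem μ h)

end HW

section Main
variable {K A : Type} [Field K] [Ring A] [Algebra K A] {Λ : Type} [PartialOrder Λ]
  {Δ : Λ → Type} [∀ l, AddCommGroup (Δ l)] [∀ l, Module A (Δ l)]
  {P : Λ → Type} [∀ l, AddCommGroup (P l)] [∀ l, Module A (P l)]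

theorem main_lemma
    (hhom : ∀ l m, ¬ l ≤ m → ∀ f : Δ l →ₗ[A] Δ m, f = 0)
    (hend : ∀ l (f : Δ l →ₗ[A] Δ l), ∃ c : K, ∀ x, f x = algebraMap K A c • x)
    (hproj : ∀ l, Module.Projective A (P l))
    (rh : ∀ l, P l →ₗ[A] Δ l)
    (hrhsurj : ∀ l, Function.Surjective (rh l))
    (hrhkerL : ∀ l, ∃ l0 : List Λ, (∀ ν ∈ l0, l < ν) ∧
      FiltL A Δ l0 ↥(LinearMap.ker (rh l))) :
    ∀ (n : ℕ) (l : List Λ), l.length = n → ∀ {M : Type} [AddCommGroup M] [Module A M],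
    FiltL A Δ l M → ∀ (μ : Λ) (π : M →ₗ[A] Δ μ), Function.Surjective π →
    ∃ l₂, FiltL A Δ l₂ ↥(LinearMap.ker π) := by
  intro n
  induction n using Nat.strong_induction_on with
  | _ n ihn =>
    intro l hlen M _ _ hF μ π hπ
    cases l with
    | nil =>
      have hM : Subsingleton M := hF
      exact ⟨[], FiltL_nil ⟨fun x y => Subtype.ext (hM.elim _ _)⟩⟩
    | cons x t =>
      obtain ⟨a, haMem, hamax⟩ := exists_max_elt (x :: t) (by simp)
      obtain ⟨l', hFa, hlen', hmem'⟩ :=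
        pull_lemma hhom hproj rh hrhsurj hrhkerL (x :: t) hF a haMem hamax
      obtain ⟨p, ⟨ep⟩, hq⟩ := hFa
      set h : Δ a →ₗ[A] Δ μ := (π.comp p.subtype).comp (ep.symm : Δ a →ₗ[A] ↥p)
        with hh
      have hcomp : ∀ z : ↥p, h (ep z) = π (z : M) := by
        intro z; simp [hh]
      by_cases hzero : h = 0
      · -- bottom layer maps to zero : recurse on the quotient
        have hple : p ≤ LinearMap.ker π := by
          intro y hy
          have := congrArg (fun g => g (ep ⟨y, hy⟩)) hzero
          simpa [hh] using this
        set π' := p.liftQ π hple with hπ'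
        have hπ'surj : Function.Surjective π' := by
          intro d
          obtain ⟨m, rfl⟩ := hπ d
          exact ⟨p.mkQ m, by simp [hπ']⟩
        have hlt : l'.length < n := by
          simp only [List.length_cons] at hlen hlen'
          omega
        obtain ⟨l₂, hl₂⟩ := ihn l'.length hlt l' rfl hq μ π' hπ'surj
        set p₀ := p.comap (LinearMap.ker π).subtype with hp₀
        have ep₀ : ↥p₀ ≃ₗ[A] Δ a := (Submodule.comapSubtypeEquivOfLe hple).trans ep
        have hkq : LinearMap.ker π' = (LinearMap.ker π).map p.mkQ :=
          Submodule.ker_liftQ p π hple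
        have e2 : (↥(LinearMap.ker π) ⧸ p₀) ≃ₗ[A] ↥(LinearMap.ker π') :=
          (subquotToMap p (LinearMap.ker π)).trans (LinearEquiv.ofEq _ _ hkq.symm)
        exact ⟨a :: l₂, p₀, ⟨ep₀⟩, FiltL_congr l₂ hl₂ e2.symm⟩
      · have hle : a ≤ μ := by
          by_contra hcon
          exact hzero (hhom a μ hcon h)
        rcases lt_or_eq_of_le hle with hlt | heq
        · -- a < μ : impossible (a was maximal)
          exfalso
          obtain ⟨l0, hl0gt, hl0F⟩ := hrhkerL μ
          obtain ⟨φ, hφ⟩ :=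
            Module.projective_lifting_property (h := hproj μ) π (rh μ) hπ
          have hFal' : FiltL A Δ (a :: l') M := ⟨p, ⟨ep⟩, hq⟩
          have hmaxal : ∀ ρ ∈ a :: l', ¬ a < ρ := by
            intro ρ hρ
            rcases List.mem_cons.mp hρ with rfl | hρ'
            · exact lt_irrefl ρ
            · exact hamax ρ (hmem' ρ hρ')
          have hφ0 : φ.comp (LinearMap.ker (rh μ)).subtype = 0 := by
            apply HomVanish hl0F hFal'
            intro ν hν ρ hρ g
            apply hhom ν ρ _ g
            intro hνρ
            exact hmaxal ρ hρ (lt_of_lt_of_le (lt_trans hlt (hl0gt ν hν)) hνρ)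
          have hker2 : LinearMap.ker (rh μ) ≤ LinearMap.ker φ := by
            intro y hy
            have := congrArg (fun g => g (⟨y, hy⟩ : ↥(LinearMap.ker (rh μ)))) hφ0
            simpa using this
          obtain ⟨ψ, hψ⟩ := factor_through φ (rh μ) (hrhsurj μ) hker2
          have hψ0 : ψ = 0 := by
            apply HomVanish (FiltL_single (LinearEquiv.refl A (Δ μ))) hFal'
            intro ν hν ρ hρ g
            have hνμ : ν = μ := by simpa using hν
            subst hνμ
            apply hhom ν ρ _ g
            intro hνρ
            exact hmaxal ρ hρ (lt_of_lt_of_le hlt hνρ)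
          have hφzero : φ = 0 := by rw [← hψ, hψ0, LinearMap.zero_comp]
          have hall0 : ∀ d : Δ μ, d = 0 := by
            intro d
            obtain ⟨y, hy⟩ := hrhsurj μ d
            have h2 : π (φ y) = rh μ y := congrArg (fun g => g y) hφ
            rw [hφzero] at h2
            simp only [LinearMap.zero_apply, map_zero] at h2
            rw [← hy, ← h2]
          apply hzero
          ext d
          rw [hall0 (h d)]
          simp
        · -- a = μ : the extension splits, kernel ≅ M ⧸ p
          subst heq
          obtain ⟨hinv, hri, hli⟩ := endo_inv (hend a) h hzero
          have hinj : Function.Injective h := fun u v huv => by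
            rw [← hli u, ← hli v, huv]
          set θ : ↥(LinearMap.ker π) →ₗ[A] M ⧸ p :=
            p.mkQ.comp (LinearMap.ker π).subtype with hθ
          have hθinj : Function.Injective θ := by
            intro y1 y2 hy
            apply Subtype.ext
            have hsub0 : p.mkQ ((y1 : M) - (y2 : M)) = 0 := by
              rw [map_sub]
              exact sub_eq_zero.mpr hy
            have hdiff : ((y1 : M) - (y2 : M)) ∈ p := by
              rw [Submodule.mkQ_apply] at hsub0
              exact (Submodule.Quotient.mk_eq_zero p).mp hsub0
            have hπd : π ((y1 : M) - (y2 : M)) = 0 := by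
              rw [map_sub, y1.2, y2.2, sub_self]
            have hz : h (ep ⟨(y1 : M) - (y2 : M), hdiff⟩) = 0 := by
              rw [hcomp]
              exact hπd
            have hz2 : ep ⟨(y1 : M) - (y2 : M), hdiff⟩ = 0 := by
              apply hinj
              rw [hz, map_zero]
            have hz3 : (⟨(y1 : M) - (y2 : M), hdiff⟩ : ↥p) = 0 := by
              apply ep.injective
              rw [hz2, map_zero]
            have := congrArg Subtype.val hz3
            exact sub_eq_zero.mp this
          have hθsurj : Function.Surjective θ := by
            intro z
            obtain ⟨m, rfl⟩ := Submodule.mkQ_surjective p z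
            set w := m - p.subtype (ep.symm (hinv (π m))) with hw
            have hwker : w ∈ LinearMap.ker π := by
              rw [LinearMap.mem_ker, hw, map_sub]
              have hx : π (p.subtype (ep.symm (hinv (π m)))) = h (hinv (π m)) := by
                simp [hh]
              rw [hx, hri, sub_self]
            refine ⟨⟨w, hwker⟩, ?_⟩
            show p.mkQ w = p.mkQ m
            rw [hw, map_sub]
            have hx0 : p.mkQ (p.subtype (ep.symm (hinv (π m)))) = 0 := by
              rw [Submodule.mkQ_apply, Submodule.Quotient.mk_eq_zero]
              exact (ep.symm (hinv (π m))).2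
            rw [hx0, sub_zero]
          exact ⟨l', FiltL_congr l' hq
            (LinearEquiv.ofBijective θ ⟨hθinj, hθsurj⟩).symm⟩

theorem ker_lemma
    (hhom : ∀ l m, ¬ l ≤ m → ∀ f : Δ l →ₗ[A] Δ m, f = 0)
    (hend : ∀ l (f : Δ l →ₗ[A] Δ l), ∃ c : K, ∀ x, f x = algebraMap K A c • x)
    (hproj : ∀ l, Module.Projective A (P l))
    (rh : ∀ l, P l →ₗ[A] Δ l)
    (hrhsurj : ∀ l, Function.Surjective (rh l))
    (hrhkerL : ∀ l, ∃ l0 : List Λ, (∀ ν ∈ l0, l < ν) ∧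
      FiltL A Δ l0 ↥(LinearMap.ker (rh l))) :
    ∀ (lN : List Λ) {N : Type} [AddCommGroup N] [Module A N], FiltL A Δ lN N →
    ∀ {M : Type} [AddCommGroup M] [Module A M] (lM : List Λ), FiltL A Δ lM M →
    ∀ (g : M →ₗ[A] N), Function.Surjective g →
    ∃ l, FiltL A Δ l ↥(LinearMap.ker g) := by
  intro lN
  induction lN with
  | nil =>
    intro N _ _ hN M _ _ lM hM g hg
    have hsN : Subsingleton N := hN
    have hker : LinearMap.ker g = ⊤ := by
      ext x
      simp [LinearMap.mem_ker, hsN.elim (g x) 0]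
    exact ⟨lM, FiltL_congr lM hM
      (Submodule.topEquiv.symm.trans (LinearEquiv.ofEq ⊤ _ hker.symm))⟩
  | cons μ tN ihN =>
    intro N _ _ hN M _ _ lM hM g hg
    obtain ⟨p, ⟨ep⟩, hqN⟩ := hN
    set g' := p.mkQ.comp g with hg'
    have hg'surj : Function.Surjective g' := by
      rw [hg', LinearMap.coe_comp]
      exact (Submodule.mkQ_surjective p).comp hg
    obtain ⟨l₁, hl₁⟩ := ihN hqN lM hM g' hg'surj
    have hresg : ∀ x ∈ LinearMap.ker g', g x ∈ p := by
      intro x hx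
      have hx' : p.mkQ (g x) = 0 := hx
      rw [Submodule.mkQ_apply] at hx'
      exact (Submodule.Quotient.mk_eq_zero p).mp hx'
    set π : ↥(LinearMap.ker g') →ₗ[A] Δ μ :=
      (ep : ↥p →ₗ[A] Δ μ).comp (g.restrict hresg) with hπ
    have hπsurj : Function.Surjective π := by
      intro d
      obtain ⟨m, hm⟩ := hg ((ep.symm d : ↥p) : N)
      have hmker : m ∈ LinearMap.ker g' := by
        show p.mkQ (g m) = 0
        rw [hm, Submodule.mkQ_apply, Submodule.Quotient.mk_eq_zero]
        exact (ep.symm d).2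
      refine ⟨⟨m, hmker⟩, ?_⟩
      show ep (g.restrict hresg ⟨m, hmker⟩) = d
      have hv : (g.restrict hresg ⟨m, hmker⟩ : ↥p) = ep.symm d :=
        Subtype.ext (by simpa [LinearMap.restrict_apply] using hm)
      rw [hv, ep.apply_symm_apply]
    obtain ⟨l₂, hl₂⟩ := main_lemma hhom hend hproj rh hrhsurj hrhkerL
      l₁.length l₁ rfl hl₁ μ π hπsurj
    have hle2 : LinearMap.ker g ≤ LinearMap.ker g' := by
      intro x hx
      show p.mkQ (g x) = 0
      rw [LinearMap.mem_ker.mp hx, map_zero]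
    have hkk : LinearMap.ker π = (LinearMap.ker g).comap (LinearMap.ker g').subtype := by
      ext x
      have hx : π x = ep (g.restrict hresg x) := rfl
      rw [LinearMap.mem_ker, hx, LinearEquiv.map_eq_zero_iff ep]
      constructor
      · intro h0
        have h0' : g (x : M) = 0 := by
          have := congrArg Subtype.val h0
          simpa [LinearMap.restrict_apply] using this
        simpa [Submodule.mem_comap] using h0'
      · intro hp'
        apply Subtype.ext
        have : g (x : M) = 0 := by simpa using hp'
        simpa [LinearMap.restrict_apply] using this
    exact ⟨l₂, FiltL_congr l₂ hl₂
      ((LinearEquiv.ofEq _ _ hkk).trans (Submodule.comapSubtypeEquivOfLe hle2))⟩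

end Main

/-- under the highest-weight axioms, in a short exact sequence
`0 → L₀ → M → N → 0`, if `M` and `N` admit Δ-filtrations then so does `L₀`. -/
theorem stmt17 (K A : Type) [Field K] [Ring A] [Algebra K A] [FiniteDimensional K A]
    (Λ : Type) [Fintype Λ] [PartialOrder Λ]
    (L : Λ → Type) [∀ l, AddCommGroup (L l)] [∀ l, Module A (L l)]
    [∀ l, Module.Finite A (L l)]
    (Δ : Λ → Type) [∀ l, AddCommGroup (Δ l)] [∀ l, Module A (Δ l)]
    [∀ l, Module.Finite A (Δ l)]
    (P : Λ → Type) [∀ l, AddCommGroup (P l)] [∀ l, Module A (P l)]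
    [∀ l, Module.Finite A (P l)]
    -- the simple modules `L λ`, pairwise non-isomorphic, exhausting all simples
    (hsimple : ∀ l, IsSimpleModule A (L l))
    (hdistinct : ∀ l m, l ≠ m → IsEmpty (L l ≃ₗ[A] L m))
    (hall : ∀ (M : Type) [AddCommGroup M] [Module A M] [Module.Finite A M],
      IsSimpleModule A M → ∃ l, Nonempty (M ≃ₗ[A] L l))
    -- axiom (1)
    (hhom : ∀ l m, ¬ l ≤ m → ∀ f : Δ l →ₗ[A] Δ m, f = 0)
    -- axiom (2): endomorphisms of `Δ λ` are scalars from `K`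
    (hend : ∀ l (f : Δ l →ₗ[A] Δ l), ∃ c : K, ∀ x, f x = algebraMap K A c • x)
    -- axiom (3): projective covers `P λ ↠ L λ` and surjections `P λ ↠ Δ λ` with
    -- kernel filtered by `Δ ν`, `ν > λ`
    (hproj : ∀ l, Module.Projective A (P l))
    (pr : ∀ l, P l →ₗ[A] L l)
    (hprsurj : ∀ l, Function.Surjective (pr l))
    (hprcover : ∀ l (N : Submodule A (P l)), Submodule.map (pr l) N = ⊤ → N = ⊤)
    (rh : ∀ l, P l →ₗ[A] Δ l)
    (hrhsurj : ∀ l, Function.Surjective (rh l))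
    (hrhker : ∀ l, HasFilt A Δ {ν | l < ν} ↥(LinearMap.ker (rh l)))
    (L₀ M N : Type) [AddCommGroup L₀] [Module A L₀] [Module.Finite A L₀]
    [AddCommGroup M] [Module A M] [Module.Finite A M]
    [AddCommGroup N] [Module A N] [Module.Finite A N]
    (f : L₀ →ₗ[A] M) (g : M →ₗ[A] N)
    (hf : Function.Injective f) (hg : Function.Surjective g)
    (hexact : LinearMap.range f = LinearMap.ker g)
    (hM : HasFilt A Δ Set.univ M) (hN : HasFilt A Δ Set.univ N) :
    HasFilt A Δ Set.univ L₀ := by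
  obtain ⟨lM, -, hMF⟩ := HasFilt_to_FiltL hM
  obtain ⟨lN, -, hNF⟩ := HasFilt_to_FiltL hN
  have hrhkerL : ∀ l, ∃ l0 : List Λ, (∀ ν ∈ l0, l < ν) ∧
      FiltL A Δ l0 ↥(LinearMap.ker (rh l)) := by
    intro l
    obtain ⟨l0, hmem, hF⟩ := HasFilt_to_FiltL (hrhker l)
    exact ⟨l0, fun ν hν => hmem ν hν, hF⟩
  obtain ⟨l, hl⟩ := ker_lemma (K := K) hhom hend hproj rh hrhsurj hrhkerL
    lN hNF lM hMF g hg
  have eL : L₀ ≃ₗ[A] ↥(LinearMap.ker g) :=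
    (LinearEquiv.ofInjective f hf).trans (LinearEquiv.ofEq _ _ hexact)
  exact FiltL_to_HasFilt l (FiltL_congr l hl eL.symm) (fun μ _ => Set.mem_univ μ)
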